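/- Let Λ_I = a·yz·∂₂∧∂₃ + a·xz·∂₃∧∂₁ + b·xy·∂₁∧∂₂ with a,b ∈ ℝ*, b/a = β/α ∈ ℚ with α, β coprime positive integers. Then (xy)^α · z^β is a Casimir function of Λ_I. -/
import Mathlib


open MvPolynomial

/-- The Poisson bracket `{f,g} = Λ(df,dg)` of the bivector on ℝ³ with components
`A23 = Λ²³`, `A31 = Λ³¹`, `A12 = Λ¹²` (coordinates `x = X 0`, `y = X 1`, `z = X 2`). -/
noncomputable def pbr (A23 A31 A12 f g : MvPolynomial (Fin 3) ℝ) : MvPolynomial (Fin 3) ℝ :=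
  A23 * (pderiv 1 f * pderiv 2 g - pderiv 2 f * pderiv 1 g)
  + A31 * (pderiv 2 f * pderiv 0 g - pderiv 0 f * pderiv 2 g)
  + A12 * (pderiv 0 f * pderiv 1 g - pderiv 1 f * pderiv 0 g)

/-- For `Λ_I = a·yz·∂₂∧∂₃ + a·xz·∂₃∧∂₁ + b·xy·∂₁∧∂₂` with `a, b ≠ 0` and
`b/a = β/α` with α, β coprime positive integers, `(xy)^α · z^β` is a Casimir. -/
theorem stmt6 (a b : ℝ) (ha : a ≠ 0) (hb : b ≠ 0)
    (α β : ℕ) (hα : 0 < α) (hβ : 0 < β) (hcop : Nat.Coprime α β)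
    (hratio : b * (α : ℝ) = a * (β : ℝ)) :
    ∀ f : MvPolynomial (Fin 3) ℝ,
      pbr (C a * (X 1 * X 2)) (C a * (X 0 * X 2)) (C b * (X 0 * X 1))
        ((X 0 * X 1) ^ α * X 2 ^ β) f = 0 := by
  intro f
  obtain ⟨A, rfl⟩ : ∃ A, α = A + 1 := ⟨α - 1, (Nat.succ_pred_eq_of_pos hα).symm⟩
  obtain ⟨B, rfl⟩ : ∃ B, β = B + 1 := ⟨β - 1, (Nat.succ_pred_eq_of_pos hβ).symm⟩
  have hC : (C b * C ((A:ℝ)+1) : MvPolynomial (Fin 3) ℝ) = C a * C ((B:ℝ)+1) := by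
    rw [← C_mul, ← C_mul]
    congr 1
    push_cast at hratio ⊢
    linarith
  have hC' : (C b * ((A : MvPolynomial (Fin 3) ℝ)+1) : MvPolynomial (Fin 3) ℝ)
      = C a * ((B : MvPolynomial (Fin 3) ℝ)+1) := by
    simpa only [map_natCast, map_add, map_one] using hC
  simp only [pbr, pderiv_mul, pderiv_pow, pderiv_X, mul_pow]
  simp only [Pi.single_eq_same, Pi.single_eq_of_ne (by decide : (0:Fin 3) ≠ 1),
    Pi.single_eq_of_ne (by decide : (0:Fin 3) ≠ 2), Pi.single_eq_of_ne (by decide : (1:Fin 3) ≠ 0),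
    Pi.single_eq_of_ne (by decide : (1:Fin 3) ≠ 2), Pi.single_eq_of_ne (by decide : (2:Fin 3) ≠ 0),
    Pi.single_eq_of_ne (by decide : (2:Fin 3) ≠ 1), mul_one, mul_zero, zero_mul, add_zero, zero_add,
    Nat.add_sub_cancel, Nat.cast_add, Nat.cast_one, C_add, C_1]
  linear_combination (hC') * (X 0 ^ (A+1) * X 1 ^ (A+2) * X 2 ^ (B+1) * pderiv 1 f
    - X 0 ^ (A+2) * X 1 ^ (A+1) * X 2 ^ (B+1) * pderiv 0 f)
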